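/- arXiv:0909.1694 — 3 statements merged into one kernel-verified Lean document; each statement's English description precedes it below -/
import Mathlib

section
/- The map sending an arithmetic sequence a = (a_n)_{n≥1} to the operator ζ_q(a,s) = Σ_{n≥1} (a_n/[n]^s)·F_n is an algebra morphism from the ring of arithmetic functions under Dirichlet convolution to operators: ζ_q(a,s) ∘ ζ_q(b,s) = ζ_q(a*b, s), where (a*b)_n = Σ_{d|n} a_d b_{n/d}. -/
open PowerSeries Finset

/-- The quantum integer `[n] = 1 + q + ⋯ + q^{n-1}` as a power series over `ℂ`. -/
noncomputable def qIntPS (n : ℕ) : PowerSeries ℂ := ∑ i ∈ Finset.range n, (X : PowerSeries ℂ) ^ i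

/-- The formal Frobenius `F_n : f(q) ↦ f(q^n)` on power series. -/
noncomputable def frobPS (n : ℕ) (f : PowerSeries ℂ) : PowerSeries ℂ :=
  PowerSeries.mk fun k => if n ∣ k then coeff (k / n) f else 0

/-- The operator `ζ_q(a, s) = Σ_{n ≥ 1} a_n [n]^{-s} F_n` for an exponent `s = -t ≤ 0`;
on a series without constant term the `k`-th coefficient only involves the terms with
`n ≤ k`, which makes the infinite sum well defined. -/
noncomputable def zetaOp (a : ℕ → ℂ) (t : ℕ) (f : PowerSeries ℂ) : PowerSeries ℂ :=
  PowerSeries.mk fun k =>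
    coeff k (∑ n ∈ Finset.Icc 1 k, (PowerSeries.C (a n)) * qIntPS n ^ t * frobPS n f)

/-- Dirichlet convolution of arithmetic sequences. -/
noncomputable def dConv (a b : ℕ → ℂ) : ℕ → ℂ := fun n => ∑ d ∈ n.divisors, a d * b (n / d)

@[simp] lemma coeff_frobPS (n k : ℕ) (f : PowerSeries ℂ) :
    coeff k (frobPS n f) = if n ∣ k then coeff (k / n) f else 0 := by
  simp [frobPS]

lemma frobPS_sum {ι : Type*} (n : ℕ) (s : Finset ι) (F : ι → PowerSeries ℂ) :
    frobPS n (∑ i ∈ s, F i) = ∑ i ∈ s, frobPS n (F i) := by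
  ext k
  simp only [coeff_frobPS, map_sum]
  split_ifs <;> simp [coeff_frobPS, *]

lemma frobPS_mul (n : ℕ) (hn : 0 < n) (f g : PowerSeries ℂ) :
    frobPS n (f * g) = frobPS n f * frobPS n g := by
  ext k
  simp only [coeff_frobPS, PowerSeries.coeff_mul]
  have hsplit : ∀ p ∈ Finset.HasAntidiagonal.antidiagonal k,
      (if n ∣ p.1 then coeff (p.1 / n) f else 0) *
        (if n ∣ p.2 then coeff (p.2 / n) g else 0) =
      if n ∣ p.1 ∧ n ∣ p.2 then coeff (p.1 / n) f * coeff (p.2 / n) g else 0 := by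
    intro p _; split_ifs with h1 h2 h2 <;> simp_all
  rw [Finset.sum_congr rfl hsplit, Finset.sum_ite, Finset.sum_const_zero, add_zero]
  by_cases hk : n ∣ k
  · rw [if_pos hk]
    refine Finset.sum_nbij' (fun q => (n * q.1, n * q.2)) (fun p => (p.1 / n, p.2 / n))
      ?_ ?_ ?_ ?_ ?_
    · rintro ⟨x, y⟩ hq
      simp only [Finset.HasAntidiagonal.mem_antidiagonal] at hq
      simp only [Finset.mem_filter, Finset.HasAntidiagonal.mem_antidiagonal]
      refine ⟨?_, Dvd.intro _ rfl, Dvd.intro _ rfl⟩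
      have := Nat.div_mul_cancel hk
      calc n * x + n * y = n * (x + y) := by ring
        _ = n * (k / n) := by rw [hq]
        _ = k := Nat.mul_div_cancel' hk
    · rintro ⟨x, y⟩ hp
      simp only [Finset.mem_filter, Finset.HasAntidiagonal.mem_antidiagonal] at hp
      obtain ⟨hxy, hx, hy⟩ := hp
      simp only [Finset.HasAntidiagonal.mem_antidiagonal]
      obtain ⟨x', rfl⟩ := hx; obtain ⟨y', rfl⟩ := hy
      rw [Nat.mul_div_cancel_left _ hn, Nat.mul_div_cancel_left _ hn, ← hxy,
        ← Nat.mul_add, Nat.mul_div_cancel_left _ hn]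
    · rintro ⟨x, y⟩ _
      simp [Nat.mul_div_cancel_left _ hn]
    · rintro ⟨x, y⟩ hp
      simp only [Finset.mem_filter, Finset.HasAntidiagonal.mem_antidiagonal] at hp
      obtain ⟨hxy, hx, hy⟩ := hp
      simp [Nat.mul_div_cancel' hx, Nat.mul_div_cancel' hy]
    · rintro ⟨x, y⟩ _
      simp [Nat.mul_div_cancel_left _ hn]
  · rw [if_neg hk]
    refine (Finset.sum_eq_zero ?_).symm
    rintro ⟨x, y⟩ hp
    simp only [Finset.mem_filter, Finset.HasAntidiagonal.mem_antidiagonal] at hp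
    exact absurd (hp.1 ▸ Nat.dvd_add hp.2.1 hp.2.2) hk

lemma frobPS_one (n : ℕ) (hn : 0 < n) : frobPS n 1 = 1 := by
  ext k
  simp only [coeff_frobPS, coeff_one]
  rcases Nat.eq_zero_or_pos k with rfl | hk
  · simp
  · rw [if_neg (by omega : ¬ k = 0)]
    by_cases h : n ∣ k
    · rw [if_pos h, if_neg]
      intro h0
      have hmc := Nat.mul_div_cancel' h
      rw [h0, Nat.mul_zero] at hmc
      omega
    · rw [if_neg h]

lemma frobPS_pow (n : ℕ) (hn : 0 < n) (f : PowerSeries ℂ) (t : ℕ) :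
    frobPS n (f ^ t) = frobPS n f ^ t := by
  induction t with
  | zero => simpa using frobPS_one n hn
  | succ t ih => rw [pow_succ, frobPS_mul n hn, ih, pow_succ]

lemma frobPS_C (n : ℕ) (c : ℂ) : frobPS n (C c) = C c := by
  ext k
  simp only [coeff_frobPS, coeff_C]
  rcases Nat.eq_zero_or_pos k with rfl | hk
  · simp
  · rw [if_neg (by omega : ¬ k = 0)]
    by_cases h : n ∣ k
    · rw [if_pos h, if_neg]
      intro h0
      rcases Nat.eq_zero_or_pos n with rfl | hn
      · simp_all
      · have hmc := Nat.mul_div_cancel' h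
        rw [h0, Nat.mul_zero] at hmc
        omega
    · rw [if_neg h]

lemma frobPS_frobPS (m n : ℕ) (hm : 0 < m) (f : PowerSeries ℂ) :
    frobPS m (frobPS n f) = frobPS (m * n) f := by
  ext k
  simp only [coeff_frobPS]
  by_cases h1 : m ∣ k
  · rw [if_pos h1]
    by_cases h2 : n ∣ k / m
    · rw [if_pos h2, if_pos, Nat.div_div_eq_div_mul]
      obtain ⟨c, hc⟩ := h2
      obtain ⟨d, rfl⟩ := h1
      exact ⟨c, by rw [mul_assoc, ← hc, Nat.mul_div_cancel_left _ hm]⟩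
    · rw [if_neg h2, if_neg]
      rintro ⟨c, rfl⟩
      exact h2 ⟨c, by rw [mul_assoc, Nat.mul_div_cancel_left _ hm]⟩
  · rw [if_neg h1, if_neg]
    rintro ⟨c, rfl⟩
    exact h1 ⟨n * c, by ring⟩

lemma frobPS_X_pow (m i : ℕ) (hm : 0 < m) :
    frobPS m ((X : PowerSeries ℂ) ^ i) = (X : PowerSeries ℂ) ^ (m * i) := by
  ext k
  simp only [coeff_frobPS, coeff_X_pow]
  by_cases h : m ∣ k
  · rw [if_pos h]
    obtain ⟨c, rfl⟩ := h
    rw [Nat.mul_div_cancel_left _ hm]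
    by_cases hc : c = i
    · simp [hc]
    · rw [if_neg hc, if_neg (by intro hh; exact hc (Nat.eq_of_mul_eq_mul_left hm hh))]
  · rw [if_neg h, if_neg]
    rintro rfl
    exact h ⟨i, rfl⟩

lemma qIntPS_mul (m n : ℕ) (hm : 0 < m) :
    qIntPS (m * n) = qIntPS m * frobPS m (qIntPS n) := by
  simp only [qIntPS]
  rw [frobPS_sum]
  simp_rw [frobPS_X_pow _ _ hm]
  rw [Finset.sum_mul_sum]
  rw [← Finset.sum_product']
  refine Finset.sum_nbij' (fun k => (k % m, k / m)) (fun p => p.1 + m * p.2) ?_ ?_ ?_ ?_ ?_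
  · intro k hk
    simp only [Finset.mem_range] at hk
    simp only [Finset.mem_product, Finset.mem_range]
    exact ⟨Nat.mod_lt _ hm, Nat.div_lt_of_lt_mul (by omega)⟩
  · rintro ⟨x, y⟩ hp
    simp only [Finset.mem_product, Finset.mem_range] at hp
    simp only [Finset.mem_range]
    calc x + m * y < m + m * y := by omega
      _ = m * (y + 1) := by ring
      _ ≤ m * n := Nat.mul_le_mul_left _ (by omega)
  · intro k _
    simp [Nat.mod_add_div]
  · rintro ⟨x, y⟩ hp
    simp only [Finset.mem_product, Finset.mem_range] at hp
    simp only [Prod.mk.injEq]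
    constructor
    · rw [Nat.add_mul_mod_self_left, Nat.mod_eq_of_lt hp.1]
    · rw [Nat.add_mul_div_left _ _ hm, Nat.div_eq_of_lt hp.1, Nat.zero_add]
  · intro k _
    rw [← pow_add, Nat.mod_add_div]

lemma coeff_frobPS_lt (n k : ℕ) (f : PowerSeries ℂ) (hf : coeff 0 f = 0)
    (h : k < n) : coeff k (frobPS n f) = 0 := by
  simp only [coeff_frobPS]
  by_cases hd : n ∣ k
  · rw [if_pos hd]
    have : k = 0 := by
      by_contra hk
      exact absurd (Nat.le_of_dvd (by omega) hd) (by omega)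
    simp [this, hf]
  · rw [if_neg hd]

/-- Vanishing: if `n > k` and `f` has no constant term then the `k`-th coefficient of
`g * frobPS n f` is zero. -/
lemma coeff_mul_frobPS_eq_zero (n k : ℕ) (g f : PowerSeries ℂ) (hf : coeff 0 f = 0)
    (h : k < n) : coeff k (g * frobPS n f) = 0 := by
  rw [PowerSeries.coeff_mul]
  refine Finset.sum_eq_zero ?_
  rintro ⟨x, y⟩ hp
  simp only [Finset.HasAntidiagonal.mem_antidiagonal] at hp
  rw [coeff_frobPS_lt n y f hf (by omega), mul_zero]

lemma coeff_zetaOp_eq (a : ℕ → ℂ) (t : ℕ) (f : PowerSeries ℂ) (hf : coeff 0 f = 0)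
    {k K : ℕ} (hkK : k ≤ K) :
    coeff k (zetaOp a t f) =
      ∑ n ∈ Finset.Icc 1 K, coeff k (C (a n) * qIntPS n ^ t * frobPS n f) := by
  simp only [zetaOp, coeff_mk, map_sum]
  refine Finset.sum_subset (Finset.Icc_subset_Icc_right hkK) ?_
  intro n hn hnk
  simp only [Finset.mem_Icc] at hn hnk
  exact coeff_mul_frobPS_eq_zero n k _ f hf (by omega)

lemma coeff_zetaOp_zero (a : ℕ → ℂ) (t : ℕ) (f : PowerSeries ℂ) :
    coeff 0 (zetaOp a t f) = 0 := by
  simp [zetaOp]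

lemma coeff_mul_congr (P u v : PowerSeries ℂ) (k : ℕ)
    (h : ∀ j ≤ k, coeff j u = coeff j v) :
    coeff k (P * u) = coeff k (P * v) := by
  rw [PowerSeries.coeff_mul, PowerSeries.coeff_mul]
  refine Finset.sum_congr rfl ?_
  rintro ⟨x, y⟩ hp
  simp only [Finset.HasAntidiagonal.mem_antidiagonal] at hp
  rw [h y (by omega)]

/-- for `s = -t ≤ 0`, the map `a ↦ ζ_q(a,s)` turns Dirichlet convolution into
composition of operators on `q·ℂ[[q]]`: `ζ_q(a,s) ∘ ζ_q(b,s) = ζ_q(a*b,s)`. -/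
theorem zetaOp_conv (a b : ℕ → ℂ) (t : ℕ) (f : PowerSeries ℂ)
    (hf : coeff 0 f = 0) :
    zetaOp a t (zetaOp b t f) = zetaOp (dConv a b) t f := by
  ext k
  set g := zetaOp b t f with hg
  set G := ∑ n ∈ Finset.Icc 1 k, C (b n) * qIntPS n ^ t * frobPS n f with hG
  -- Step 0: g has no constant term
  have hg0 : coeff 0 g = 0 := coeff_zetaOp_zero b t f
  -- Step 1: replace `frobPS m g` by `frobPS m G` inside the k-th coefficient
  have hfrob : ∀ m, 1 ≤ m → ∀ j ≤ k, coeff j (frobPS m g) = coeff j (frobPS m G) := by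
    intro m hm j hj
    simp only [coeff_frobPS]
    by_cases hd : m ∣ j
    · rw [if_pos hd, if_pos hd]
      have hjm : j / m ≤ k := le_trans (Nat.div_le_self _ _) hj
      rw [hg, coeff_zetaOp_eq b t f hf hjm, hG, map_sum]
    · rw [if_neg hd, if_neg hd]
  have step1 : coeff k (zetaOp a t g) =
      ∑ m ∈ Finset.Icc 1 k, coeff k (C (a m) * qIntPS m ^ t * frobPS m G) := by
    rw [coeff_zetaOp_eq a t g hg0 (le_refl k)]
    refine Finset.sum_congr rfl ?_
    intro m hm
    simp only [Finset.mem_Icc] at hm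
    exact coeff_mul_congr _ _ _ k (hfrob m hm.1)
  rw [step1]
  -- Step 2: expand frobPS m G
  have step2 : ∀ m, 1 ≤ m → C (a m) * qIntPS m ^ t * frobPS m G =
      ∑ n ∈ Finset.Icc 1 k,
        C (a m * b n) * qIntPS (m * n) ^ t * frobPS (m * n) f := by
    intro m hm
    have hm' : 0 < m := hm
    rw [hG, frobPS_sum, Finset.mul_sum]
    refine Finset.sum_congr rfl ?_
    intro n hn
    rw [frobPS_mul m hm', frobPS_mul m hm', frobPS_C, frobPS_pow m hm',
      frobPS_frobPS m n hm', qIntPS_mul m n hm', mul_pow, map_mul]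
    ring
  -- rewrite LHS as a double sum
  have step3 : (∑ m ∈ Finset.Icc 1 k, coeff k (C (a m) * qIntPS m ^ t * frobPS m G)) =
      ∑ p ∈ (Finset.Icc 1 k ×ˢ Finset.Icc 1 k),
        coeff k (C (a p.1 * b p.2) * qIntPS (p.1 * p.2) ^ t * frobPS (p.1 * p.2) f) := by
    rw [Finset.sum_product]
    refine Finset.sum_congr rfl ?_
    intro m hm
    simp only [Finset.mem_Icc] at hm
    rw [step2 m hm.1, map_sum]
  rw [step3]
  -- restrict to pairs with p.1 * p.2 ≤ k
  have step4 : (∑ p ∈ (Finset.Icc 1 k ×ˢ Finset.Icc 1 k),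
        coeff k (C (a p.1 * b p.2) * qIntPS (p.1 * p.2) ^ t * frobPS (p.1 * p.2) f)) =
      ∑ p ∈ (Finset.Icc 1 k ×ˢ Finset.Icc 1 k).filter (fun p => p.1 * p.2 ≤ k),
        coeff k (C (a p.1 * b p.2) * qIntPS (p.1 * p.2) ^ t * frobPS (p.1 * p.2) f) := by
    symm
    refine Finset.sum_subset (Finset.filter_subset _ _) ?_
    intro p hp hnp
    simp only [Finset.mem_filter, hp, true_and, not_le] at hnp
    exact coeff_mul_frobPS_eq_zero _ k _ f hf hnp
  rw [step4]
  -- RHS: expand the Dirichlet convolution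
  have rhs : coeff k (zetaOp (dConv a b) t f) =
      ∑ x ∈ (Finset.Icc 1 k).sigma (fun N => N.divisors),
        coeff k (C (a x.2 * b (x.1 / x.2)) * qIntPS x.1 ^ t * frobPS x.1 f) := by
    rw [coeff_zetaOp_eq (dConv a b) t f hf (le_refl k), Finset.sum_sigma]
    refine Finset.sum_congr rfl ?_
    intro N hN
    simp only [dConv]
    rw [map_sum, Finset.sum_mul, Finset.sum_mul, map_sum]
  rw [rhs]
  -- bijection between the two index sets
  refine Finset.sum_nbij' (fun p => ⟨p.1 * p.2, p.1⟩) (fun x => (x.2, x.1 / x.2)) ?_ ?_ ?_ ?_ ?_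
  · rintro ⟨m, n⟩ hp
    simp only [Finset.mem_filter, Finset.mem_product, Finset.mem_Icc] at hp
    obtain ⟨⟨⟨hm1, hmk⟩, hn1, hnk⟩, hmn⟩ := hp
    simp only [Finset.mem_sigma, Finset.mem_Icc, Nat.mem_divisors]
    exact ⟨⟨Nat.one_le_iff_ne_zero.mpr (by positivity), hmn⟩, Dvd.intro _ rfl, by positivity⟩
  · rintro ⟨N, d⟩ hx
    simp only [Finset.mem_sigma, Finset.mem_Icc, Nat.mem_divisors] at hx
    obtain ⟨⟨hN1, hNk⟩, hd, hN0⟩ := hx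
    simp only [Finset.mem_filter, Finset.mem_product, Finset.mem_Icc]
    have hd1 : 1 ≤ d := Nat.one_le_iff_ne_zero.mpr (fun h => hN0 (by simpa [h] using hd))
    have hdN : d ≤ N := Nat.le_of_dvd (by omega) hd
    have hq1 : 1 ≤ N / d := Nat.one_le_div_iff (by omega) |>.mpr hdN
    have hqN : N / d ≤ N := Nat.div_le_self _ _
    have hmul : d * (N / d) = N := Nat.mul_div_cancel' hd
    exact ⟨⟨⟨hd1, by omega⟩, hq1, by omega⟩, by omega⟩
  · rintro ⟨m, n⟩ hp
    simp only [Finset.mem_filter, Finset.mem_product, Finset.mem_Icc] at hp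
    obtain ⟨⟨⟨hm1, _⟩, _⟩, _⟩ := hp
    simp [Nat.mul_div_cancel_left _ hm1]
  · rintro ⟨N, d⟩ hx
    simp only [Finset.mem_sigma, Finset.mem_Icc, Nat.mem_divisors] at hx
    obtain ⟨_, hd, hN0⟩ := hx
    simp [Nat.mul_div_cancel' hd]
  · rintro ⟨m, n⟩ hp
    simp only [Finset.mem_filter, Finset.mem_product, Finset.mem_Icc] at hp
    obtain ⟨⟨⟨hm1, _⟩, _⟩, _⟩ := hp
    simp [Nat.mul_div_cancel_left _ hm1]
end

section
/- The formal series B(t) = Σ_{n≥0} ((1−q) q^n e^{[n]t} − t q^{2n} e^{[n]t}) satisfies the functional equation B(t) = q e^t B(qt) + 1 − q − t, hence equals the generating series 𝔹(t) of the Bernoulli–Carlitz fractions. -/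
open PowerSeries

/-- The quantum integer `[n] = 1 + q + ⋯ + q^{n-1}` as a polynomial over `ℚ`. -/
noncomputable def qIntP (n : ℕ) : Polynomial ℚ := ∑ i ∈ Finset.range n, Polynomial.X ^ i

/-- The coefficient of `t^k/k!` in the `n`-th summand
`(1−q) q^n e^{[n]t} − t q^{2n} e^{[n]t}`, namely `(1−q) q^n [n]^k − k q^{2n} [n]^{k-1}`. -/
noncomputable def bTerm (n k : ℕ) : Polynomial ℚ :=
  (1 - Polynomial.X) * Polynomial.X ^ n * qIntP n ^ k -
    (if k = 0 then 0 else (k : Polynomial ℚ) * Polynomial.X ^ (2 * n) * qIntP n ^ (k - 1))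

/-- The series `B(t) = Σ_{n≥0} ((1−q) q^n e^{[n]t} − t q^{2n} e^{[n]t})`, an element of
`ℚ[[q]][[t]]`; the sum over `n` converges coefficientwise in the `q`-adic topology since
the `n`-th summand has `q`-order at least `n`. -/
noncomputable def Bq : PowerSeries (PowerSeries ℚ) :=
  PowerSeries.mk fun k => ((k.factorial : ℚ)⁻¹) •
    (PowerSeries.mk fun d : ℕ =>
      ∑ n ∈ Finset.range (d + 1), Polynomial.coeff (bTerm n k) d : PowerSeries ℚ)

lemma qIntP_zero : qIntP 0 = 0 := by simp [qIntP]

lemma qIntP_succ (n : ℕ) : qIntP (n + 1) = 1 + Polynomial.X * qIntP n := by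
  simp only [qIntP, Finset.sum_range_succ']
  rw [Finset.mul_sum]
  ring_nf

lemma bTerm_coeff_eq_zero (n k d : ℕ) (h : d < n) : (bTerm n k).coeff d = 0 := by
  have h1 : bTerm n k = ((1 - Polynomial.X) * qIntP n ^ k -
      (if k = 0 then 0 else (k : Polynomial ℚ) * Polynomial.X ^ n * qIntP n ^ (k - 1))) *
      Polynomial.X ^ n := by
    unfold bTerm; split_ifs <;> ring_nf <;> rw [two_mul, pow_add] <;> ring
  rw [h1, Polynomial.coeff_mul_X_pow', if_neg (by omega)]

lemma sum_choose_pow (x : Polynomial ℚ) (k : ℕ) :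
    ∑ j ∈ Finset.range (k+1), (k.choose j : Polynomial ℚ) * x ^ j = (1 + x) ^ k := by
  rw [add_comm 1 x, add_pow]
  exact Finset.sum_congr rfl fun j _ => by ring

lemma key (n k : ℕ) :
    ∑ j ∈ Finset.range (k+1), (k.choose j : Polynomial ℚ) * (Polynomial.X ^ (j+1) * bTerm n j)
      = bTerm (n+1) k := by
  set X := (Polynomial.X : Polynomial ℚ) with hX
  set P := qIntP n with hP
  have hQ : qIntP (n+1) = 1 + X * P := qIntP_succ n
  simp only [bTerm, mul_sub, Finset.sum_sub_distrib]
  congr 1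
  · -- first parts
    have : ∀ j ∈ Finset.range (k+1), (k.choose j : Polynomial ℚ) *
        (X ^ (j+1) * ((1 - X) * X ^ n * P ^ j))
        = ((1 - X) * X ^ (n+1)) * ((k.choose j : Polynomial ℚ) * (X * P) ^ j) := by
      intro j _; ring
    rw [Finset.sum_congr rfl this, ← Finset.mul_sum, sum_choose_pow, ← hQ]
  · -- second parts
    rcases k with _ | k
    · simp
    · rw [if_neg (Nat.succ_ne_zero k), Finset.sum_range_succ']
      have h0 : (Nat.choose (k+1) 0 : Polynomial ℚ) *
          (X ^ (0+1) * (if 0 = 0 then 0 else ((0:ℕ) : Polynomial ℚ) * X ^ (2*n) * P ^ (0-1))) = 0 := by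
        simp
      rw [h0, add_zero]
      have hterm : ∀ m ∈ Finset.range (k+1), ((k+1).choose (m+1) : Polynomial ℚ) *
          (X ^ (m+1+1) * (if m+1 = 0 then 0 else ((m+1 : ℕ) : Polynomial ℚ) * X ^ (2*n) * P ^ (m+1-1)))
          = (((k+1 : ℕ) : Polynomial ℚ) * X ^ (2*n+2)) * ((k.choose m : Polynomial ℚ) * (X * P) ^ m) := by
        intro m _
        rw [if_neg (Nat.succ_ne_zero m)]
        have hnat : (k+1).choose (m+1) * (m+1) = (k+1) * k.choose m :=
          (Nat.add_one_mul_choose_eq k m).symm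
        have hcast : ((k+1).choose (m+1) : Polynomial ℚ) * ((m+1 : ℕ) : Polynomial ℚ)
            = (((k:ℕ)+1 : ℕ) : Polynomial ℚ) * (k.choose m : Polynomial ℚ) := by
          push_cast [← Nat.cast_mul]
          exact_mod_cast congrArg (fun t : ℕ => (t : Polynomial ℚ)) hnat
        calc ((k+1).choose (m+1) : Polynomial ℚ) *
            (X ^ (m+1+1) * (((m+1 : ℕ) : Polynomial ℚ) * X ^ (2*n) * P ^ m))
            = (((k+1).choose (m+1) : Polynomial ℚ) * ((m+1 : ℕ) : Polynomial ℚ)) *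
              (X ^ (m+2) * X ^ (2*n) * P ^ m) := by ring
          _ = ((((k:ℕ)+1 : ℕ) : Polynomial ℚ) * (k.choose m : Polynomial ℚ)) *
              (X ^ (m+2) * X ^ (2*n) * P ^ m) := by rw [hcast]
          _ = _ := by push_cast; ring
      rw [Finset.sum_congr rfl hterm, ← Finset.mul_sum, sum_choose_pow, ← hQ,
        Nat.add_sub_cancel, show 2*(n+1) = 2*n+2 by ring]

/-- The `t^k`-coefficient of `Bq`, up to the factor `1/k!`. -/
noncomputable def Aq (k : ℕ) : PowerSeries ℚ :=
  PowerSeries.mk fun d => ∑ n ∈ Finset.range (d+1), (bTerm n k).coeff d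

lemma coeff_Aq (k d N : ℕ) (h : d < N) :
    (PowerSeries.coeff d) (Aq k) = ∑ n ∈ Finset.range N, (bTerm n k).coeff d := by
  rw [Aq, coeff_mk]
  refine Finset.sum_subset (Finset.range_subset_range.2 h) fun n hn hn' => ?_
  exact bTerm_coeff_eq_zero n k d (by simp only [Finset.mem_range] at hn'; omega)

lemma coeff_Xpow_mul_Aq (j m d : ℕ) :
    (PowerSeries.coeff d) ((PowerSeries.X : PowerSeries ℚ) ^ m * Aq j)
      = ∑ n ∈ Finset.range (d+1), (Polynomial.X ^ m * bTerm n j).coeff d := by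
  rw [PowerSeries.coeff_X_pow_mul']
  have h2 : ∀ n, (Polynomial.X ^ m * bTerm n j).coeff d
      = if m ≤ d then (bTerm n j).coeff (d - m) else 0 := fun n => by
    rw [mul_comm, Polynomial.coeff_mul_X_pow']
  simp_rw [h2]
  split_ifs with h
  · rw [coeff_Aq j (d-m) (d+1) (by omega)]
  · simp

lemma bTerm_zero (k : ℕ) :
    bTerm 0 k = (if k = 0 then 1 - Polynomial.X else 0) - (if k = 1 then 1 else 0) := by
  rcases k with _ | _ | k <;>
    simp [bTerm, qIntP_zero, zero_pow, Nat.succ_ne_zero]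

lemma Aq_rec (k : ℕ) :
    Aq k = (∑ j ∈ Finset.range (k+1),
        ((k.choose j : ℚ)) • ((PowerSeries.X : PowerSeries ℚ) ^ (j+1) * Aq j))
      + ((if k = 0 then 1 - PowerSeries.X else 0) - (if k = 1 then 1 else 0)) := by
  ext d
  rw [map_add, map_sum]
  have hδ : (PowerSeries.coeff d)
      ((if k = 0 then 1 - PowerSeries.X else 0 : PowerSeries ℚ) - (if k = 1 then 1 else 0))
      = (bTerm 0 k).coeff d := by
    rw [bTerm_zero]
    rcases k with _ | _ | k <;>
      simp [PowerSeries.coeff_one, PowerSeries.coeff_X, Polynomial.coeff_one, Polynomial.coeff_X,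
        Nat.succ_ne_zero, eq_comm]
  rw [hδ]
  have hsum : ∀ j ∈ Finset.range (k+1), (PowerSeries.coeff d)
      (((k.choose j : ℚ)) • ((PowerSeries.X : PowerSeries ℚ) ^ (j+1) * Aq j))
      = ∑ n ∈ Finset.range (d+1),
          ((k.choose j : Polynomial ℚ) * (Polynomial.X ^ (j+1) * bTerm n j)).coeff d := by
    intro j _
    rw [map_smul, smul_eq_mul, coeff_Xpow_mul_Aq, Finset.mul_sum]
    refine Finset.sum_congr rfl fun n _ => ?_
    rw [show (k.choose j : Polynomial ℚ) = Polynomial.C (k.choose j : ℚ) from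
      (Polynomial.C_eq_natCast _).symm, Polynomial.coeff_C_mul]
  rw [Finset.sum_congr rfl hsum, Finset.sum_comm]
  have : ∀ n ∈ Finset.range (d+1), ∑ j ∈ Finset.range (k+1),
      ((k.choose j : Polynomial ℚ) * (Polynomial.X ^ (j+1) * bTerm n j)).coeff d
      = (bTerm (n+1) k).coeff d := fun n _ => by
    rw [← Polynomial.finset_sum_coeff, key]
  rw [Finset.sum_congr rfl this, coeff_Aq k d (d+2) (by omega), Finset.sum_range_succ']

lemma fact_inv_choose (i k : ℕ) (hi : i ≤ k) :
    ((k.factorial : ℚ))⁻¹ * (k.choose (k - i) : ℚ)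
      = (1 / (i.factorial : ℚ)) * ((k - i).factorial : ℚ)⁻¹ := by
  rw [Nat.choose_symm hi, Nat.cast_choose ℚ hi]
  have h1 : (k.factorial : ℚ) ≠ 0 := Nat.cast_ne_zero.2 k.factorial_ne_zero
  have h2 : (i.factorial : ℚ) ≠ 0 := Nat.cast_ne_zero.2 i.factorial_ne_zero
  have h3 : ((k - i).factorial : ℚ) ≠ 0 := Nat.cast_ne_zero.2 (k - i).factorial_ne_zero
  field_simp

theorem Bq_eq : Bq = (PowerSeries.C : PowerSeries ℚ →+* PowerSeries (PowerSeries ℚ)) PowerSeries.X * PowerSeries.exp (PowerSeries ℚ) *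
        PowerSeries.rescale PowerSeries.X Bq
      + (PowerSeries.C : PowerSeries ℚ →+* PowerSeries (PowerSeries ℚ)) (1 - PowerSeries.X) - PowerSeries.X := by
  have hBq : Bq = PowerSeries.mk fun k => ((k.factorial : ℚ)⁻¹) • Aq k := rfl
  refine PowerSeries.ext fun k => ?_
  rw [hBq, coeff_mk, map_sub, map_add, mul_assoc, coeff_C_mul, coeff_mul, coeff_C,
    PowerSeries.coeff_X]
  simp_rw [coeff_exp, coeff_rescale, coeff_mk]
  rw [Finset.Nat.sum_antidiagonal_eq_sum_range_succ_mk]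
  rw [Aq_rec k, smul_add, smul_sub, Finset.smul_sum]
  have hδ0 : ((k.factorial : ℚ))⁻¹ • (if k = 0 then 1 - PowerSeries.X else 0 : PowerSeries ℚ)
      = if k = 0 then 1 - PowerSeries.X else 0 := by
    split_ifs with h
    · subst h; simp
    · simp
  have hδ1 : ((k.factorial : ℚ))⁻¹ • (if k = 1 then 1 else 0 : PowerSeries ℚ)
      = if k = 1 then 1 else 0 := by
    split_ifs with h
    · subst h; simp
    · simp
  rw [hδ0, hδ1]
  rw [← Finset.sum_range_reflect (fun j => ((k.factorial : ℚ))⁻¹ •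
    ((k.choose j : ℚ) • ((PowerSeries.X : PowerSeries ℚ) ^ (j+1) * Aq j))) (k+1)]
  rw [Finset.mul_sum, add_sub_assoc]
  congr 1
  refine Finset.sum_congr rfl fun i hi => ?_
  have hik : i ≤ k := by simp only [Finset.mem_range] at hi; omega
  dsimp only
  rw [show k + 1 - 1 - i = k - i by omega]
  rw [smul_smul, fact_inv_choose i k hik,
    show (algebraMap ℚ (PowerSeries ℚ)) (1 / (i.factorial : ℚ))
      = PowerSeries.C (1 / (i.factorial : ℚ)) from rfl]
  simp only [smul_eq_C_mul, map_mul]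
  ring

theorem Bq_uniq (Y : PowerSeries (PowerSeries ℚ))
    (hY : Y = (PowerSeries.C : PowerSeries ℚ →+* PowerSeries (PowerSeries ℚ)) PowerSeries.X * PowerSeries.exp (PowerSeries ℚ) *
        PowerSeries.rescale PowerSeries.X Y
      + (PowerSeries.C : PowerSeries ℚ →+* PowerSeries (PowerSeries ℚ)) (1 - PowerSeries.X) - PowerSeries.X) : Y = Bq := by
  have hB := Bq_eq
  have hDeq : Y - Bq = (PowerSeries.C : PowerSeries ℚ →+* PowerSeries (PowerSeries ℚ)) PowerSeries.X *
      PowerSeries.exp (PowerSeries ℚ) * PowerSeries.rescale PowerSeries.X (Y - Bq) := by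
    rw [map_sub (PowerSeries.rescale (PowerSeries.X : PowerSeries ℚ))]
    calc Y - Bq = ((PowerSeries.C : PowerSeries ℚ →+* PowerSeries (PowerSeries ℚ)) PowerSeries.X * PowerSeries.exp (PowerSeries ℚ) *
          PowerSeries.rescale PowerSeries.X Y + (PowerSeries.C : PowerSeries ℚ →+* PowerSeries (PowerSeries ℚ)) (1 - PowerSeries.X)
          - PowerSeries.X)
        - ((PowerSeries.C : PowerSeries ℚ →+* PowerSeries (PowerSeries ℚ)) PowerSeries.X * PowerSeries.exp (PowerSeries ℚ) *
          PowerSeries.rescale PowerSeries.X Bq + (PowerSeries.C : PowerSeries ℚ →+* PowerSeries (PowerSeries ℚ)) (1 - PowerSeries.X)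
          - PowerSeries.X) := by rw [← hY, ← hB]
      _ = _ := by ring
  have hzero : ∀ d k, (PowerSeries.coeff d) ((PowerSeries.coeff k) (Y - Bq)) = 0 := by
    intro d
    induction d using Nat.strong_induction_on with
    | _ d ih =>
      intro k
      conv_lhs => rw [hDeq]
      rw [mul_assoc, coeff_C_mul,
        PowerSeries.coeff_mul k (PowerSeries.exp (PowerSeries ℚ))
          (PowerSeries.rescale PowerSeries.X (Y - Bq)),
        Finset.mul_sum, map_sum]
      refine Finset.sum_eq_zero fun p hp => ?_
      rw [coeff_exp, coeff_rescale]
      have hterm : (PowerSeries.X : PowerSeries ℚ) *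
          ((algebraMap ℚ (PowerSeries ℚ)) (1/(p.1.factorial:ℚ)) *
            ((PowerSeries.X : PowerSeries ℚ) ^ p.2 * (PowerSeries.coeff p.2) (Y - Bq)))
          = (PowerSeries.X : PowerSeries ℚ) ^ (p.2+1) *
            (PowerSeries.C (1/(p.1.factorial:ℚ)) * (PowerSeries.coeff p.2) (Y - Bq)) := by
        rw [show (algebraMap ℚ (PowerSeries ℚ)) (1/(p.1.factorial:ℚ))
          = PowerSeries.C (1/(p.1.factorial:ℚ)) from rfl, pow_succ]
        ring
      rw [hterm, PowerSeries.coeff_X_pow_mul']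
      split_ifs with h
      · rw [coeff_C_mul, ih (d - (p.2+1)) (by omega) p.2, mul_zero]
      · rfl
  have hD0 : Y - Bq = 0 :=
    PowerSeries.ext fun k => PowerSeries.ext fun d => by
      rw [hzero d k, map_zero, map_zero]
  exact sub_eq_zero.mp hD0

/-- `B(t)` satisfies the functional equation `B(t) = q e^t B(qt) + 1 − q − t`,
and is its unique power-series solution, hence equals the generating series `𝔹(t)` of the
Bernoulli–Carlitz fractions. -/
theorem Bq_functional_equation :
    (Bq = (PowerSeries.C : PowerSeries ℚ →+* PowerSeries (PowerSeries ℚ)) PowerSeries.X * PowerSeries.exp (PowerSeries ℚ) *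
        PowerSeries.rescale PowerSeries.X Bq
      + (PowerSeries.C : PowerSeries ℚ →+* PowerSeries (PowerSeries ℚ)) (1 - PowerSeries.X) - PowerSeries.X) ∧
    (∀ Y : PowerSeries (PowerSeries ℚ),
      (Y = (PowerSeries.C : PowerSeries ℚ →+* PowerSeries (PowerSeries ℚ)) PowerSeries.X * PowerSeries.exp (PowerSeries ℚ) *
          PowerSeries.rescale PowerSeries.X Y
        + (PowerSeries.C : PowerSeries ℚ →+* PowerSeries (PowerSeries ℚ)) (1 - PowerSeries.X) - PowerSeries.X) → Y = Bq) := by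
  exact ⟨Bq_eq, fun Y hY => Bq_uniq Y hY⟩
end

section
/- The q-Zeta operator satisfies the distribution relation: for every positive integer N, every positive rational x, and every exponent s, Σ_{j=0}^{N−1} (F_N/[N]^s) ∘ ζ_q(s, (x+j)/N) = ζ_q(s, x), where ζ_q(s,x) = Σ_{n≥0} F_{n+x}/[n+x]^s. -/
open Real

/-- The quantum number `[x] = (q^x − 1)/(q − 1)` for a real exponent `x` (via `rpow`). -/
noncomputable def qNumR (q x : ℝ) : ℝ := (q ^ x - 1) / (q - 1)

/-- The Hurwitz `q`-Zeta operator at a nonpositive integer exponent `s = -t`: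
`ζ_q(s,x) f (q) = Σ_{k≥0} [k+x]^t f(q^{k+x})`. -/
noncomputable def hurwitzZetaQ (q : ℝ) (t : ℕ) (x : ℝ) (f : ℝ → ℂ) : ℂ :=
  ∑' k : ℕ, ((qNumR q ((k : ℝ) + x)) ^ t : ℂ) * f (q ^ ((k : ℝ) + x))

/-- the distribution relation for the Hurwitz `q`-Zeta operator: for every
positive integer `N`, every positive rational `x`, and every nonpositive integer exponent
`s = -t`, `Σ_{0 ≤ j < N} (F_N/[N]^s) ∘ ζ_q(s,(x+j)/N) = ζ_q(s,x)` (applied to `f`; the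
summability hypothesis expresses the `q`-adic/analytic convergence of the defining series). -/
theorem hurwitzZetaQ_distribution (N : ℕ) (hN : 0 < N) (x : ℚ) (hx : 0 < x) (t : ℕ)
    (q : ℝ) (hq : q ∈ Set.Ioo (0 : ℝ) 1) (f : ℝ → ℂ)
    (hsum : Summable fun k : ℕ => ((qNumR q ((k : ℝ) + x)) ^ t : ℂ) * f (q ^ ((k : ℝ) + x))) :
    ∑ j ∈ Finset.range N,
        ((qNumR q N) ^ t : ℂ) * hurwitzZetaQ (q ^ (N : ℝ)) t (((x : ℝ) + j) / N) f
      = hurwitzZetaQ q t x f := by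
  obtain ⟨hq0, hq1⟩ := hq
  haveI : NeZero N := ⟨hN.ne'⟩
  have hNR : (0:ℝ) < N := Nat.cast_pos.mpr hN
  have hqN1 : q ^ (N:ℝ) < 1 := Real.rpow_lt_one hq0.le hq1 hNR
  have hq1' : q - 1 ≠ 0 := sub_ne_zero.mpr hq1.ne
  have hqN1' : q ^ (N:ℝ) - 1 ≠ 0 := sub_ne_zero.mpr hqN1.ne
  set a : ℕ → ℂ := fun n => ((qNumR q ((n : ℝ) + x)) ^ t : ℂ) * f (q ^ ((n:ℝ) + x)) with ha
  have hA : Summable a := hsum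
  have key : ∀ (j k : ℕ),
      ((qNumR q N : ℂ)) ^ t * (((qNumR (q ^ (N:ℝ)) ((k:ℝ) + ((x:ℝ) + j)/N) : ℂ)) ^ t *
        f ((q ^ (N:ℝ)) ^ ((k:ℝ) + ((x:ℝ) + j)/N))) = a (k * N + j) := by
    intro j k
    have harg : (N:ℝ) * ((k:ℝ) + ((x:ℝ) + j)/N) = ((k * N + j : ℕ) : ℝ) + x := by
      push_cast
      field_simp
      ring
    have hpow : (q ^ (N:ℝ)) ^ ((k:ℝ) + ((x:ℝ) + j)/N) = q ^ (((k * N + j : ℕ):ℝ) + x) := by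
      rw [← Real.rpow_mul hq0.le, harg]
    have hnum : qNumR q (N:ℝ) * qNumR (q ^ (N:ℝ)) ((k:ℝ) + ((x:ℝ) + j)/N)
        = qNumR q (((k * N + j : ℕ):ℝ) + x) := by
      unfold qNumR
      rw [hpow, div_mul_div_comm, mul_comm (q ^ (N:ℝ) - 1),
        mul_div_mul_right _ _ hqN1']
    simp only [ha]
    rw [hpow, ← mul_assoc, ← mul_pow, ← Complex.ofReal_mul, hnum]
  have hsum' : Summable fun p : ℕ × Fin N => a (p.1 * N + (p.2 : ℕ)) :=
    ((Nat.divModEquiv N).symm.summable_iff).mpr hA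
  have hinner : ∀ j : ℕ, Summable fun k : ℕ => a (k * N + j) := by
    intro j
    exact hA.comp_injective fun k₁ k₂ h => by
      have : k₁ * N = k₂ * N := by omega
      exact Nat.eq_of_mul_eq_mul_right hN this
  have h1 : hurwitzZetaQ q t x f = ∑' p : ℕ × Fin N, a (p.1 * N + (p.2 : ℕ)) :=
    (Equiv.tsum_eq (Nat.divModEquiv N).symm a).symm
  rw [h1, Summable.tsum_prod' hsum' fun k => (Summable.of_finite : Summable fun j : Fin N => a (k * N + (j:ℕ)))]
  · simp only [tsum_fintype]
    rw [Summable.tsum_finsetSum (f := fun (c : Fin N) (b : ℕ) => a (b * N + (c:ℕ))) (fun j _ => hinner (j : ℕ))]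
    refine ((Fin.sum_univ_eq_sum_range
      (fun j => ((qNumR q N) ^ t : ℂ) * hurwitzZetaQ (q ^ (N : ℝ)) t (((x : ℝ) + j) / N) f)
      N).symm).trans ?_
    refine Finset.sum_congr rfl fun j _ => ?_
    unfold hurwitzZetaQ
    rw [← tsum_mul_left]
    exact tsum_congr fun k => key (j : ℕ) k
end
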